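/- arXiv:2206.01808 — 3 statements merged into one kernel-verified Lean document; each statement's English description precedes it below -/
import Mathlib

section
/- For every integer n ≥ 1, the 2^{2n} matrices ω_S Γ_S, where S ranges over all subsets of {0,1,…,2n−1}, Γ_S denotes the product of the Jordan–Wigner matrices Γ_j for j ∈ S taken in increasing order of index (Γ_∅ = I), and ω_S = 1 if |S|(|S|−1)/2 is even and ω_S = i if |S|(|S|−1)/2 is odd, form a basis of the real vector space of Hermitian 2^n × 2^n complex matrices. -/
open Matrix

noncomputable section

/-- The Pauli matrix `σ_x`. -/
def σx : Matrix (Fin 2) (Fin 2) ℂ := !![0, 1; 1, 0]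

/-- The Pauli matrix `σ_y`. -/
def σy : Matrix (Fin 2) (Fin 2) ℂ := !![0, -Complex.I; Complex.I, 0]

/-- The Pauli matrix `σ_z`. -/
def σz : Matrix (Fin 2) (Fin 2) ℂ := !![1, 0; 0, -1]

/-- The `n`-fold Kronecker product of a family of `2 × 2` matrices, realized on the
index type `Fin n → Fin 2` (factor `l = 0` is the leftmost tensor factor). -/
def tensorFam {n : ℕ} (M : Fin n → Matrix (Fin 2) (Fin 2) ℂ) :
    Matrix (Fin n → Fin 2) (Fin n → Fin 2) ℂ :=
  Matrix.of fun i j => ∏ l, M l (i l) (j l)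

/-- The family of `2 × 2` factors of the Jordan–Wigner matrix `Γ_a` for `a ∈ {0, …, 2n-1}`:
writing `a = 2k` or `a = 2k+1`, the factors are `I₂^{⊗(n-k-1)} ⊗ σ ⊗ σ_z^{⊗ k}` where
`σ = σ_x` if `a` is even and `σ = σ_y` if `a` is odd. -/
def JWfactors (n : ℕ) (a : Fin (2 * n)) : Fin n → Matrix (Fin 2) (Fin 2) ℂ := fun l =>
  if (l : ℕ) < n - (a : ℕ) / 2 - 1 then 1
  else if (l : ℕ) = n - (a : ℕ) / 2 - 1 then (if (a : ℕ) % 2 = 0 then σx else σy)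
  else σz

/-- The Jordan–Wigner matrices `Γ_0, …, Γ_{2n-1}`, as `2^n × 2^n` complex matrices. -/
def JW (n : ℕ) (a : Fin (2 * n)) : Matrix (Fin (2 ^ n)) (Fin (2 ^ n)) ℂ :=
  Matrix.reindex finFunctionFinEquiv finFunctionFinEquiv (tensorFam (JWfactors n a))

/-- For a subset `S ⊆ {0, …, 2n-1}`, the product `Γ_S` of the Jordan–Wigner matrices `Γ_j`,
`j ∈ S`, taken in increasing order of index (with `Γ_∅ = I`). -/
def JWprod (n : ℕ) (S : Finset (Fin (2 * n))) : Matrix (Fin (2 ^ n)) (Fin (2 ^ n)) ℂ :=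
  ((S.sort (· ≤ ·)).map (JW n)).prod

/-- The phase `ω_S`: `1` if `|S|(|S|-1)/2` is even and `i` if it is odd. -/
def JWphase (n : ℕ) (S : Finset (Fin (2 * n))) : ℂ :=
  if Even (S.card * (S.card - 1) / 2) then 1 else Complex.I

/-! ### Pauli matrix computations -/

lemma one_fin2 : (1 : Matrix (Fin 2) (Fin 2) ℂ) = !![1,0;0,1] := by
  ext i j; fin_cases i <;> fin_cases j <;> simp [Matrix.one_apply]

lemma sx_sq : σx * σx = 1 := by
  rw [one_fin2]; simp [σx, Matrix.mul_fin_two]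
lemma sy_sq : σy * σy = 1 := by
  rw [one_fin2]; simp [σy, Matrix.mul_fin_two, Complex.I_mul_I]
lemma sz_sq : σz * σz = 1 := by
  rw [one_fin2]; simp [σz, Matrix.mul_fin_two]
lemma sx_herm : σxᴴ = σx := by
  ext i j; fin_cases i <;> fin_cases j <;> simp [σx, conjTranspose_apply]
lemma sy_herm : σyᴴ = σy := by
  ext i j; fin_cases i <;> fin_cases j <;> simp [σy, conjTranspose_apply]
lemma sz_herm : σzᴴ = σz := by
  ext i j; fin_cases i <;> fin_cases j <;> simp [σz, conjTranspose_apply]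
lemma sx_sy : σx * σy = (-1 : ℂ) • (σy * σx) := by
  ext i j; fin_cases i <;> fin_cases j <;> simp [σx, σy, Matrix.mul_fin_two]
lemma sy_sx : σy * σx = (-1 : ℂ) • (σx * σy) := by
  ext i j; fin_cases i <;> fin_cases j <;> simp [σx, σy, Matrix.mul_fin_two]
lemma sx_sz : σx * σz = (-1 : ℂ) • (σz * σx) := by
  ext i j; fin_cases i <;> fin_cases j <;> simp [σx, σz, Matrix.mul_fin_two]
lemma sy_sz : σy * σz = (-1 : ℂ) • (σz * σy) := by
  ext i j; fin_cases i <;> fin_cases j <;> simp [σy, σz, Matrix.mul_fin_two]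

/-! ### Kronecker product lemmas -/

lemma tensorFam_mul {n : ℕ} (M N : Fin n → Matrix (Fin 2) (Fin 2) ℂ) :
    tensorFam M * tensorFam N = tensorFam (fun l => M l * N l) := by
  ext i j
  simp only [tensorFam, Matrix.mul_apply, Matrix.of_apply]
  rw [Finset.prod_univ_sum]
  rw [Fintype.piFinset_univ]
  exact Finset.sum_congr rfl fun k _ => (Finset.prod_mul_distrib).symm

lemma tensorFam_one {n : ℕ} : tensorFam (fun _ : Fin n => 1) = 1 := by
  ext i j
  simp only [tensorFam, Matrix.of_apply, Matrix.one_apply]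
  by_cases h : i = j
  · subst h; simp
  · obtain ⟨l, hl⟩ := Function.ne_iff.mp h
    rw [if_neg h]
    exact Finset.prod_eq_zero (Finset.mem_univ l) (by simp [Matrix.one_apply, hl])

lemma tensorFam_conjTranspose {n : ℕ} (M : Fin n → Matrix (Fin 2) (Fin 2) ℂ) :
    (tensorFam M)ᴴ = tensorFam (fun l => (M l)ᴴ) := by
  ext i j
  simp only [tensorFam, Matrix.conjTranspose_apply, Matrix.of_apply]
  rw [show star (∏ l, M l (j l) (i l)) = (starRingEnd ℂ) (∏ l, M l (j l) (i l)) from rfl,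
    map_prod]
  rfl

lemma tensorFam_smul {n : ℕ} (M N : Fin n → Matrix (Fin 2) (Fin 2) ℂ) (ε : Fin n → ℂ)
    (h : ∀ l, M l = ε l • N l) :
    tensorFam M = (∏ l, ε l) • tensorFam N := by
  ext i j
  simp only [tensorFam, Matrix.of_apply, Matrix.smul_apply, smul_eq_mul]
  rw [← Finset.prod_mul_distrib]
  exact Finset.prod_congr rfl fun l _ => by rw [h l]; rfl

/-! ### Jordan–Wigner matrices: square one, Hermitian, anticommuting -/

section JWlemmas
variable {n : ℕ}

lemma JWfactors_of_lt (a : Fin (2*n)) (l : Fin n) (h : (l:ℕ) < n - (a:ℕ)/2 - 1) :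
    JWfactors n a l = 1 := by simp only [JWfactors]; rw [if_pos h]

lemma JWfactors_of_eq (a : Fin (2*n)) (l : Fin n) (h : (l:ℕ) = n - (a:ℕ)/2 - 1) :
    JWfactors n a l = if (a:ℕ) % 2 = 0 then σx else σy := by
  simp only [JWfactors]; rw [if_neg (by omega), if_pos h]

lemma JWfactors_of_gt (a : Fin (2*n)) (l : Fin n) (h : n - (a:ℕ)/2 - 1 < (l:ℕ)) :
    JWfactors n a l = σz := by simp only [JWfactors]; rw [if_neg (by omega), if_neg (by omega)]

lemma anticomm_aux (a b : Fin (2*n)) (hab : a ≠ b) (h : (a:ℕ)/2 ≤ (b:ℕ)/2) (l : Fin n) :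
    JWfactors n a l * JWfactors n b l
      = (if (l:ℕ) = n - (a:ℕ)/2 - 1 then (-1:ℂ) else 1) • (JWfactors n b l * JWfactors n a l) := by
  have ha : (a:ℕ)/2 < n := by have := a.isLt; omega
  have hb : (b:ℕ)/2 < n := by have := b.isLt; omega
  rcases eq_or_lt_of_le h with hk | hk
  · have hpar : (a:ℕ) % 2 ≠ (b:ℕ) % 2 := fun hp => hab (Fin.ext (by omega))
    rcases lt_trichotomy (l:ℕ) (n - (a:ℕ)/2 - 1) with h1|h1|h1
    · rw [JWfactors_of_lt a l h1, JWfactors_of_lt b l (by omega),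
        if_neg (show ¬((l:ℕ) = n - (a:ℕ)/2 - 1) by omega)]; simp
    · rw [JWfactors_of_eq a l h1, JWfactors_of_eq b l (by omega),
        if_pos (show (l:ℕ) = n - (a:ℕ)/2 - 1 from h1)]
      rcases Nat.mod_two_eq_zero_or_one (a:ℕ) with hpa|hpa <;>
        rcases Nat.mod_two_eq_zero_or_one (b:ℕ) with hpb|hpb <;>
        simp only [hpa, hpb] at hpar ⊢ <;> first
          | exact absurd rfl hpar
          | simpa using sx_sy
          | simpa using sy_sx
    · rw [JWfactors_of_gt a l h1, JWfactors_of_gt b l (by omega),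
        if_neg (show ¬((l:ℕ) = n - (a:ℕ)/2 - 1) by omega)]; simp
  · have hlt : n - (b:ℕ)/2 - 1 < n - (a:ℕ)/2 - 1 := by omega
    rcases lt_trichotomy (l:ℕ) (n - (b:ℕ)/2 - 1) with h1|h1|h1
    · rw [JWfactors_of_lt a l (by omega), JWfactors_of_lt b l h1,
        if_neg (show ¬((l:ℕ) = n - (a:ℕ)/2 - 1) by omega)]; simp
    · rw [JWfactors_of_lt a l (by omega), JWfactors_of_eq b l h1,
        if_neg (show ¬((l:ℕ) = n - (a:ℕ)/2 - 1) by omega)]; simp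
    · rcases lt_trichotomy (l:ℕ) (n - (a:ℕ)/2 - 1) with h2|h2|h2
      · rw [JWfactors_of_lt a l h2, JWfactors_of_gt b l h1,
          if_neg (show ¬((l:ℕ) = n - (a:ℕ)/2 - 1) by omega)]; simp
      · rw [JWfactors_of_eq a l h2, JWfactors_of_gt b l h1,
          if_pos (show (l:ℕ) = n - (a:ℕ)/2 - 1 from h2)]
        rcases Nat.mod_two_eq_zero_or_one (a:ℕ) with hpa|hpa <;> simp only [hpa] <;>
          first | simpa using sx_sz | simpa using sy_sz
      · rw [JWfactors_of_gt a l h2, JWfactors_of_gt b l h1,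
          if_neg (show ¬((l:ℕ) = n - (a:ℕ)/2 - 1) by omega)]; simp

lemma JW_mul (a b : Fin (2*n)) : JW n a * JW n b =
    Matrix.reindex finFunctionFinEquiv finFunctionFinEquiv
      (tensorFam fun l => JWfactors n a l * JWfactors n b l) := by
  simp only [JW, Matrix.reindex_apply, Matrix.submatrix_mul_equiv, tensorFam_mul]

lemma JW_anticomm_half (a b : Fin (2*n)) (hab : a ≠ b) (h : (a:ℕ)/2 ≤ (b:ℕ)/2) :
    JW n a * JW n b = (-1 : ℂ) • (JW n b * JW n a) := by
  have ha : (a:ℕ)/2 < n := by have := a.isLt; omega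
  rw [JW_mul, JW_mul]
  rw [tensorFam_smul _ _ _ (anticomm_aux a b hab h)]
  have : (∏ l : Fin n, if (l:ℕ) = n - (a:ℕ)/2 - 1 then (-1:ℂ) else 1) = -1 := by
    have : ∀ l : Fin n, ((l:ℕ) = n - (a:ℕ)/2 - 1) ↔ (l = ⟨n - (a:ℕ)/2 - 1, by omega⟩) := by
      intro l; rw [Fin.ext_iff]
    simp only [this]
    rw [Finset.prod_ite_eq' Finset.univ (⟨n - (a:ℕ)/2 - 1, by omega⟩ : Fin n) (fun _ => (-1:ℂ))]
    simp
  rw [this]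
  rfl

lemma JW_anticomm (a b : Fin (2*n)) (hab : a ≠ b) :
    JW n a * JW n b = (-1 : ℂ) • (JW n b * JW n a) := by
  rcases le_total ((a:ℕ)/2) ((b:ℕ)/2) with h | h
  · exact JW_anticomm_half a b hab h
  · have := JW_anticomm_half b a hab.symm h
    rw [this]; simp

lemma JW_sq (a : Fin (2*n)) : JW n a * JW n a = 1 := by
  rw [JW_mul]
  have : (fun l => JWfactors n a l * JWfactors n a l) = fun _ : Fin n => 1 := by
    funext l
    simp only [JWfactors]
    split_ifs <;> simp [sx_sq, sy_sq, sz_sq]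
  rw [this, tensorFam_one, Matrix.reindex_apply, Matrix.submatrix_one_equiv]

lemma JWfactors_herm (a : Fin (2*n)) (l : Fin n) :
    (JWfactors n a l)ᴴ = JWfactors n a l := by
  simp only [JWfactors]
  split_ifs <;> simp [sx_herm, sy_herm, sz_herm]

lemma JW_herm (a : Fin (2*n)) : (JW n a)ᴴ = JW n a := by
  simp only [JW, Matrix.reindex_apply, Matrix.conjTranspose_submatrix, tensorFam_conjTranspose]
  have : (fun l => (JWfactors n a l)ᴴ) = JWfactors n a := funext (JWfactors_herm a)
  rw [this]

end JWlemmas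

/-! ### Abstract products of anticommuting involutions -/

section Plemmas
variable {N K : ℕ} (G : Fin K → Matrix (Fin N) (Fin N) ℂ)

/-- Product of the `G a` along a list. -/
def P (l : List (Fin K)) : Matrix (Fin N) (Fin N) ℂ := (l.map G).prod

lemma P_nil : P G [] = 1 := rfl
lemma P_cons (a : Fin K) (l : List (Fin K)) : P G (a :: l) = G a * P G l := by
  simp [P]
lemma P_append (l₁ l₂ : List (Fin K)) : P G (l₁ ++ l₂) = P G l₁ * P G l₂ := by
  simp [P]

lemma comm_past (Ganti : ∀ a b, a ≠ b → G a * G b = (-1 : ℂ) • (G b * G a))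
    (b : Fin K) : ∀ (l : List (Fin K)), b ∉ l →
    G b * P G l = ((-1:ℂ) ^ l.length) • (P G l * G b) := by
  intro l
  induction l with
  | nil => simp [P]
  | cons a t ih =>
    intro hb
    have hba : b ≠ a := fun h => hb (h ▸ List.mem_cons_self)
    have hbt : b ∉ t := fun h => hb (List.mem_cons_of_mem a h)
    rw [P_cons, ← mul_assoc, Ganti b a hba, smul_mul_assoc, mul_assoc, ih hbt,
      mul_smul_comm, smul_smul, List.length_cons, pow_succ, ← mul_assoc]
    congr 1
    ring

lemma comm_past' (Ganti : ∀ a b, a ≠ b → G a * G b = (-1 : ℂ) • (G b * G a))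
    (b : Fin K) (l : List (Fin K)) (hb : b ∉ l) :
    P G l * G b = ((-1:ℂ) ^ l.length) • (G b * P G l) := by
  rw [comm_past G Ganti b l hb, smul_smul, ← mul_pow]
  norm_num

lemma P_rev_mul (Gsq : ∀ a, G a * G a = 1) (l : List (Fin K)) :
    P G l.reverse * P G l = 1 := by
  induction l with
  | nil => simp [P]
  | cons a t ih =>
    rw [List.reverse_cons, P_append, P_cons, P_cons, P_nil, mul_one, mul_assoc,
      ← mul_assoc (G a) (G a), Gsq a, one_mul, ih]

lemma P_reverse_eq (Ganti : ∀ a b, a ≠ b → G a * G b = (-1 : ℂ) • (G b * G a)) :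
    ∀ (l : List (Fin K)), l.Nodup →
    P G l.reverse = ((-1:ℂ) ^ (l.length.choose 2)) • P G l := by
  intro l
  induction l with
  | nil => simp [P]
  | cons a t ih =>
    intro hnd
    have hat : a ∉ t := (List.nodup_cons.mp hnd).1
    rw [List.reverse_cons, P_append, P_cons, P_nil, mul_one, ih (List.nodup_cons.mp hnd).2,
      smul_mul_assoc, comm_past' G Ganti a t hat, smul_smul, P_cons, List.length_cons]
    congr 1
    rw [← pow_add, Nat.choose_succ_succ, Nat.choose_one_right, Nat.add_comm]

lemma symmDiff_singleton_not_mem {α : Type*} [DecidableEq α] {X : Finset α} {a : α} (h : a ∉ X) :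
    symmDiff X {a} = insert a X := by
  ext x; by_cases hx : x = a <;> simp [Finset.mem_symmDiff, hx, h]

lemma symmDiff_singleton_mem {α : Type*} [DecidableEq α] {X : Finset α} {a : α} (h : a ∈ X) :
    symmDiff X {a} = X.erase a := by
  ext x; by_cases hx : x = a <;> simp [Finset.mem_symmDiff, hx, h]

lemma symmDiff_insert_singleton {α : Type*} [DecidableEq α] {X : Finset α} {a b : α} (h : b ≠ a) :
    symmDiff (insert b X) {a} = insert b (symmDiff X {a}) := by
  ext x; by_cases hx : x = b
  · subst hx; simp [Finset.mem_symmDiff, h]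
  · simp [Finset.mem_symmDiff, hx]

lemma step (Gsq : ∀ a, G a * G a = 1)
    (Ganti : ∀ a b, a ≠ b → G a * G b = (-1 : ℂ) • (G b * G a)) (a : Fin K) :
    ∀ (l : List (Fin K)), l.Pairwise (· < ·) →
    ∃ (ε : ℂ) (m : List (Fin K)), (ε = 1 ∨ ε = -1) ∧ m.Pairwise (· < ·) ∧
      G a * P G l = ε • P G m ∧ m.toFinset = symmDiff l.toFinset {a} := by
  intro l
  induction l with
  | nil =>
    intro _
    refine ⟨1, [a], Or.inl rfl, List.pairwise_singleton _ a, ?_, ?_⟩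
    · rw [P_nil, P_cons, P_nil, mul_one, one_smul]
    · simp [symmDiff_singleton_not_mem]
  | cons b t ih =>
    intro hs
    have hst : t.Pairwise (· < ·) := hs.of_cons
    have hbt : ∀ c ∈ t, b < c := fun c hc => List.rel_of_pairwise_cons hs hc
    rcases lt_trichotomy a b with hab | hab | hab
    · -- a < b : insert at front
      refine ⟨1, a :: b :: t, Or.inl rfl, ?_, by rw [one_smul, P_cons G a (b :: t)], ?_⟩
      · exact List.pairwise_cons.mpr ⟨fun c hc => by
          rcases List.mem_cons.mp hc with rfl | hc
          · exact hab
          · exact hab.trans (hbt c hc), hs⟩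
      · have ha : a ∉ (b :: t).toFinset := by
          simp only [List.toFinset_cons, Finset.mem_insert, List.mem_toFinset]
          rintro (rfl | hc)
          · exact lt_irrefl a hab
          · exact absurd (hab.trans (hbt a hc)) (lt_irrefl a)
        rw [symmDiff_singleton_not_mem ha]
        simp
    · -- a = b : cancel
      subst hab
      have hat : a ∉ t := fun h => lt_irrefl a (hbt a h)
      refine ⟨1, t, Or.inl rfl, hst, ?_, ?_⟩
      · rw [P_cons, ← mul_assoc, Gsq a, one_mul, one_smul]
      · have ha : a ∈ (a :: t).toFinset := by simp
        rw [symmDiff_singleton_mem ha]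
        simp only [List.toFinset_cons]
        rw [Finset.erase_insert (by simpa using hat)]
    · -- b < a : commute past b
      obtain ⟨ε, m, hε, hms, hPm, hmf⟩ := ih hst
      refine ⟨-ε, b :: m, by rcases hε with rfl | rfl <;> norm_num, ?_, ?_, ?_⟩
      · refine List.pairwise_cons.mpr ⟨fun c hc => ?_, hms⟩
        have : c ∈ m.toFinset := List.mem_toFinset.mpr hc
        rw [hmf] at this
        rw [Finset.mem_symmDiff] at this
        rcases this with ⟨h1, _⟩ | ⟨h1, _⟩
        · exact hbt c (List.mem_toFinset.mp h1)
        · rw [Finset.mem_singleton] at h1; subst h1; exact hab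
      · rw [P_cons, ← mul_assoc, Ganti a b (ne_of_gt hab), smul_mul_assoc, mul_assoc, hPm,
          mul_smul_comm, smul_smul, P_cons]
        have hcoef : (-1 : ℂ) * ε = -ε := by ring
        rw [hcoef]
      · rw [List.toFinset_cons, hmf, List.toFinset_cons,
          symmDiff_insert_singleton (ne_of_lt hab)]

/-- Elements of a list appearing an odd number of times, as a `Finset`. -/
def U (L : List (Fin K)) : Finset (Fin K) := L.foldr (fun a s => symmDiff s {a}) ∅

lemma U_nil : U (K := K) [] = ∅ := rfl
lemma U_cons (a : Fin K) (L : List (Fin K)) : U (a :: L) = symmDiff (U L) {a} := rfl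

lemma foldr_symmDiff (L : List (Fin K)) (X : Finset (Fin K)) :
    L.foldr (fun a s => symmDiff s {a}) X = symmDiff (U L) X := by
  induction L with
  | nil =>
    show X = symmDiff ⊥ X
    rw [bot_symmDiff]
  | cons a L ih =>
    simp only [List.foldr_cons, ih, U_cons]
    rw [symmDiff_comm (symmDiff (U L) {a}) X, ← symmDiff_assoc, symmDiff_comm X (U L)]

lemma U_append (L₁ L₂ : List (Fin K)) : U (L₁ ++ L₂) = symmDiff (U L₁) (U L₂) := by
  rw [U, List.foldr_append]
  exact foldr_symmDiff L₁ (U L₂)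

lemma U_nodup (L : List (Fin K)) (h : L.Nodup) : U L = L.toFinset := by
  induction L with
  | nil => simp [U_nil]
  | cons a L ih =>
    rw [U_cons, ih (List.nodup_cons.mp h).2, List.toFinset_cons,
      symmDiff_singleton_not_mem (by simpa using (List.nodup_cons.mp h).1)]

lemma sorted_eq_of_toFinset_eq {l m : List (Fin K)} (hl : l.Pairwise (· < ·))
    (hm : m.Pairwise (· < ·)) (h : l.toFinset = m.toFinset) : l = m := by
  haveI : IsAntisymm (Fin K) (· < ·) := ⟨fun a b h1 h2 => absurd h1 (asymm h2)⟩
  exact List.Perm.eq_of_pairwise' hl hm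
    (List.perm_of_nodup_nodup_toFinset_eq hl.nodup hm.nodup h)

/-- Normal form for an arbitrary word in the generators. -/
lemma normal_form (Gsq : ∀ a, G a * G a = 1)
    (Ganti : ∀ a b, a ≠ b → G a * G b = (-1 : ℂ) • (G b * G a)) :
    ∀ (L : List (Fin K)), ∃ (ε : ℂ) (m : List (Fin K)), (ε = 1 ∨ ε = -1) ∧
      m.Pairwise (· < ·) ∧ P G L = ε • P G m ∧ m.toFinset = U L := by
  intro L
  induction L with
  | nil => exact ⟨1, [], Or.inl rfl, List.Pairwise.nil, by rw [one_smul], by simp [U_nil]⟩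
  | cons a L ih =>
    obtain ⟨ε, m, hε, hms, hPm, hmf⟩ := ih
    obtain ⟨ε', m', hε', hms', hPm', hmf'⟩ := step G Gsq Ganti a m hms
    refine ⟨ε * ε', m', ?_, hms', ?_, ?_⟩
    · rcases hε with rfl | rfl <;> rcases hε' with rfl | rfl <;> norm_num
    · rw [P_cons, hPm, mul_smul_comm, hPm', smul_smul]
    · rw [hmf', hmf, U_cons]

end Plemmas

/-! ### Products over subsets -/

section Qlemmas
variable {n : ℕ}

lemma JWprod_eq_P (S : Finset (Fin (2 * n))) : JWprod n S = P (JW n) (S.sort (· ≤ ·)) := rfl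

lemma sort_sorted_lt' (S : Finset (Fin (2 * n))) : (S.sort (· ≤ ·)).Pairwise (· < ·) :=
  S.sortedLT_sort.pairwise

lemma JWprod_of_list {m : List (Fin (2 * n))} (hm : m.Pairwise (· < ·)) :
    P (JW n) m = JWprod n m.toFinset := by
  have h := sorted_eq_of_toFinset_eq (sort_sorted_lt' m.toFinset) hm (by simp)
  rw [JWprod_eq_P, h]

lemma JWprod_mul (S T : Finset (Fin (2 * n))) :
    ∃ ε : ℂ, (ε = 1 ∨ ε = -1) ∧
      JWprod n S * JWprod n T = ε • JWprod n (symmDiff S T) := by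
  obtain ⟨ε, m, hε, hms, hPm, hmf⟩ :=
    normal_form (JW n) JW_sq (fun a b h => JW_anticomm a b h)
      (S.sort (· ≤ ·) ++ T.sort (· ≤ ·))
  refine ⟨ε, hε, ?_⟩
  rw [JWprod_eq_P, JWprod_eq_P, ← P_append, hPm, JWprod_of_list hms]
  congr 2
  rw [hmf, U_append, U_nodup _ (S.sort_nodup _), U_nodup _ (T.sort_nodup _)]
  simp

lemma comm_past_finset {b : Fin (2 * n)} {S : Finset (Fin (2 * n))} (hb : b ∉ S) :
    JW n b * JWprod n S = ((-1:ℂ) ^ S.card) • (JWprod n S * JW n b) := by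
  rw [JWprod_eq_P, comm_past (JW n) (fun a b h => JW_anticomm a b h) b _
    (by simpa [Finset.mem_sort] using hb), Finset.length_sort]

lemma trace_JWprod_zero (S : Finset (Fin (2 * n))) (hS : S ≠ ∅) :
    (JWprod n S).trace = 0 := by
  rcases Nat.even_or_odd S.card with hpar | hpar
  · -- even cardinality : pick b ∈ S
    obtain ⟨b, hb⟩ := Finset.nonempty_iff_ne_empty.mpr hS
    set S' := S.erase b with hS'
    have hbS' : b ∉ S' := Finset.notMem_erase b S
    have hcard : Odd S'.card := by
      obtain ⟨c, hc⟩ := hpar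
      have h1 : 1 ≤ S.card := Finset.card_pos.mpr ⟨b, hb⟩
      have hce : S'.card = S.card - 1 := by rw [hS']; exact Finset.card_erase_of_mem hb
      exact ⟨c - 1, by omega⟩
    obtain ⟨ε, m, hε, hms, hPm, hmf⟩ :=
      step (JW n) JW_sq (fun a b h => JW_anticomm a b h) b (S'.sort (· ≤ ·))
        (sort_sorted_lt' S')
    have hmS : m.toFinset = S := by
      rw [hmf, Finset.sort_toFinset, symmDiff_singleton_not_mem hbS', hS',
        Finset.insert_erase hb]
    have h1 : JW n b * JWprod n S' = ε • JWprod n S := by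
      rw [JWprod_eq_P, hPm, JWprod_of_list hms, hmS]
    have h2 : JWprod n S' * JW n b = - (JW n b * JWprod n S') := by
      rw [JWprod_eq_P, comm_past' (JW n) (fun a b h => JW_anticomm a b h) b _
        (by simpa [Finset.mem_sort] using hbS'), Finset.length_sort, hcard.neg_one_pow]
      simp
    have h3 : (JW n b * JWprod n S').trace = 0 := by
      have := Matrix.trace_mul_comm (JW n b) (JWprod n S')
      rw [h2, Matrix.trace_neg] at this
      linear_combination this / 2
    rw [h1, Matrix.trace_smul, smul_eq_mul] at h3
    rcases hε with rfl | rfl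
    · simpa using h3
    · have : (JWprod n S).trace = 0 := by linear_combination -h3
      exact this
  · -- odd cardinality : pick b ∉ S
    have hSne : S ≠ Finset.univ := by
      intro h
      rw [h, Finset.card_univ, Fintype.card_fin] at hpar
      exact (Nat.not_odd_iff_even.mpr (even_two_mul n)) hpar
    obtain ⟨b, hb⟩ : ∃ b, b ∉ S := by
      by_contra h
      push_neg at h
      exact hSne (Finset.eq_univ_iff_forall.mpr h)
    have hc := comm_past_finset hb
    have key : (JWprod n S).trace = - (JWprod n S).trace := by
      calc (JWprod n S).trace = (JWprod n S * (JW n b * JW n b)).trace := by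
            rw [JW_sq, mul_one]
        _ = ((JWprod n S * JW n b) * JW n b).trace := by rw [mul_assoc]
        _ = (JW n b * (JWprod n S * JW n b)).trace := (Matrix.trace_mul_comm _ _).symm
        _ = ((JW n b * JWprod n S) * JW n b).trace := by rw [mul_assoc]
        _ = ((((-1:ℂ) ^ S.card) • (JWprod n S * JW n b)) * JW n b).trace := by rw [hc]
        _ = ((-1:ℂ) ^ S.card) * ((JWprod n S * JW n b) * JW n b).trace := by
            rw [smul_mul_assoc, Matrix.trace_smul, smul_eq_mul]
        _ = - (JWprod n S).trace := by
            rw [hpar.neg_one_pow, mul_assoc, JW_sq, mul_one]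
            ring
    linear_combination key / 2

end Qlemmas

section Blemmas
variable {n : ℕ}

lemma JWprod_conjT_P (S : Finset (Fin (2 * n))) :
    (JWprod n S)ᴴ = P (JW n) ((S.sort (· ≤ ·)).reverse) := by
  rw [JWprod_eq_P, P, Matrix.conjTranspose_list_prod, List.map_map]
  rw [show Matrix.conjTranspose ∘ JW n = JW n from funext JW_herm]
  rw [P, List.map_reverse]

lemma JWprod_conjTranspose (S : Finset (Fin (2 * n))) :
    (JWprod n S)ᴴ = ((-1:ℂ) ^ ((S.card * (S.card - 1) / 2))) • JWprod n S := by
  rw [JWprod_conjT_P, P_reverse_eq (JW n) (fun a b h => JW_anticomm a b h) _ (S.sort_nodup _),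
    Finset.length_sort, Nat.choose_two_right, ← JWprod_eq_P]

lemma B_herm (S : Finset (Fin (2 * n))) : (JWphase n S • JWprod n S).IsHermitian := by
  unfold Matrix.IsHermitian
  rw [Matrix.conjTranspose_smul, JWprod_conjTranspose, smul_smul]
  congr 1
  unfold JWphase
  by_cases h : Even (S.card * (S.card - 1) / 2)
  · rw [if_pos h, h.neg_one_pow]
    simp
  · rw [if_neg h, (Nat.not_even_iff_odd.mp h).neg_one_pow]
    simp [Complex.conj_I]

lemma phase_star_mul (S : Finset (Fin (2 * n))) :
    star (JWphase n S) * JWphase n S = 1 := by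
  unfold JWphase
  by_cases h : Even (S.card * (S.card - 1) / 2)
  · rw [if_pos h]; simp
  · rw [if_neg h]
    simp [Complex.conj_I]

lemma B_mul_self (S : Finset (Fin (2 * n))) :
    (JWphase n S • JWprod n S) * (JWphase n S • JWprod n S) = 1 := by
  nth_rewrite 1 [← B_herm S]
  rw [Matrix.conjTranspose_smul, smul_mul_assoc, mul_smul_comm, smul_smul, phase_star_mul,
    one_smul, JWprod_conjT_P, JWprod_eq_P]
  exact P_rev_mul (JW n) JW_sq _

end Blemmas

/-- For every `n ≥ 1`, the `2^(2n)` matrices `ω_S Γ_S`, indexed by the subsets `S` of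
`{0, …, 2n-1}`, form a basis of the real vector space of Hermitian `2^n × 2^n` complex
matrices: they are linearly independent over `ℝ` and their real span is exactly the set of
Hermitian matrices. -/
theorem jordan_wigner_products_basis_of_hermitian_matrices (n : ℕ) (hn : 1 ≤ n) :
    LinearIndependent ℝ (fun S : Finset (Fin (2 * n)) => JWphase n S • JWprod n S) ∧
    (Submodule.span ℝ
        (Set.range (fun S : Finset (Fin (2 * n)) => JWphase n S • JWprod n S)) :
          Set (Matrix (Fin (2 ^ n)) (Fin (2 ^ n)) ℂ)) =
      {A : Matrix (Fin (2 ^ n)) (Fin (2 ^ n)) ℂ | A.IsHermitian} := by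
  have htrace_ne : ∀ S T : Finset (Fin (2 * n)), S ≠ T →
      ((JWphase n S • JWprod n S) * (JWphase n T • JWprod n T)).trace = 0 := by
    intro S T hST
    obtain ⟨ε, hε, hmul⟩ := JWprod_mul S T
    rw [smul_mul_assoc, mul_smul_comm, hmul]
    have hne : symmDiff S T ≠ ∅ := fun h => hST (symmDiff_eq_bot.mp h)
    rw [smul_smul, smul_smul, Matrix.trace_smul, trace_JWprod_zero _ hne]
    simp
  have htrace_eq : ∀ S : Finset (Fin (2 * n)),
      ((JWphase n S • JWprod n S) * (JWphase n S • JWprod n S)).trace = (2:ℂ)^n := by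
    intro S
    rw [B_mul_self S, Matrix.trace_one]
    simp
  have liC : LinearIndependent ℂ
      (fun S : Finset (Fin (2 * n)) => JWphase n S • JWprod n S) := by
    rw [Fintype.linearIndependent_iff]
    intro g hg T
    have h0 : ∑ S, g S * ((JWphase n S • JWprod n S) * (JWphase n T • JWprod n T)).trace
        = 0 := by
      have hterm : ∀ S : Finset (Fin (2 * n)),
          g S * ((JWphase n S • JWprod n S) * (JWphase n T • JWprod n T)).trace
          = ((g S • (JWphase n S • JWprod n S)) * (JWphase n T • JWprod n T)).trace := by
        intro S
        conv_rhs => rw [smul_mul_assoc, Matrix.trace_smul, smul_eq_mul]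
      rw [Finset.sum_congr rfl (fun S _ => hterm S), ← Matrix.trace_sum, ← Finset.sum_mul, hg,
        zero_mul, Matrix.trace_zero]
    rw [Finset.sum_eq_single T (fun S _ hST => by rw [htrace_ne S T hST, mul_zero])
      (fun h => absurd (Finset.mem_univ T) h)] at h0
    rw [htrace_eq T] at h0
    exact (mul_eq_zero.mp h0).resolve_right (pow_ne_zero n two_ne_zero)
  have hcard : Fintype.card (Finset (Fin (2 * n)))
      = Module.finrank ℂ (Matrix (Fin (2 ^ n)) (Fin (2 ^ n)) ℂ) := by
    simp [Fintype.card_finset, Module.finrank_matrix, two_mul, pow_add]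
  let bb := basisOfLinearIndependentOfCardEqFinrank liC hcard
  have hbb : ⇑bb = fun S : Finset (Fin (2 * n)) => JWphase n S • JWprod n S :=
    coe_basisOfLinearIndependentOfCardEqFinrank liC hcard
  have hsc : ∀ (r : ℝ) (M : Matrix (Fin (2 ^ n)) (Fin (2 ^ n)) ℂ), ((r:ℂ)) • M = r • M := by
    intro r M
    rw [show ((r:ℂ)) = r • (1:ℂ) by simp [Complex.real_smul], smul_assoc, one_smul]
  constructor
  · refine liC.restrict_scalars ?_
    have h1 : (fun (r : ℝ) => r • (1:ℂ)) = fun r : ℝ => (r : ℂ) := by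
      funext r; simp [Complex.real_smul]
    rw [h1]
    exact Complex.ofReal_injective
  · ext A
    simp only [SetLike.mem_coe, Set.mem_setOf_eq]
    constructor
    · intro hA
      refine Submodule.span_induction (p := fun x _ => x.IsHermitian) ?_ ?_ ?_ ?_ hA
      · rintro x ⟨S, rfl⟩
        exact B_herm S
      · exact Matrix.isHermitian_zero
      · exact fun x y _ _ hx hy => hx.add hy
      · intro r x _ hx
        unfold Matrix.IsHermitian at hx ⊢
        rw [Matrix.conjTranspose_smul, star_trivial, hx]
    · intro hA
      set z : Finset (Fin (2 * n)) → ℂ := fun S => bb.repr A S with hz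
      have hrep : ∑ S, z S • bb S = A := bb.sum_repr A
      have hrep' : ∑ S, star (z S) • bb S = A := by
        have h2 : (∑ S, z S • bb S)ᴴ = Aᴴ := by rw [hrep]
        rw [Matrix.conjTranspose_sum] at h2
        simp only [Matrix.conjTranspose_smul] at h2
        rw [hA] at h2
        rw [← h2]
        refine Finset.sum_congr rfl fun S _ => ?_
        congr 1
        have h3 : (bb S)ᴴ = bb S := by
          rw [congrFun hbb S]
          exact B_herm S
        rw [h3]
      have hzreal : z = fun S => star (z S) := by
        have e1 : ⇑(bb.repr (∑ S, z S • bb S)) = z := Module.Basis.repr_sum_self bb z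
        have e2 : ⇑(bb.repr (∑ S, star (z S) • bb S)) = fun S => star (z S) :=
          Module.Basis.repr_sum_self bb _
        rw [hrep] at e1
        rw [hrep'] at e2
        rw [← e1, ← e2]
      have hre : ∀ S, z S = (((z S).re : ℝ) : ℂ) := by
        intro S
        have := congrFun hzreal S
        exact (Complex.conj_eq_iff_re.mp this.symm).symm
      have hA2 : A = ∑ S, ((z S).re : ℝ) • (JWphase n S • JWprod n S) := by
        rw [← hrep]
        refine Finset.sum_congr rfl fun S _ => ?_
        rw [congrFun hbb S, ← hsc, ← hre S]
      rw [hA2]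
      refine Submodule.sum_mem _ fun S _ => ?_
      exact Submodule.smul_mem _ _ (Submodule.subset_span ⟨S, rfl⟩)
end
end

section
/- Let H_1, …, H_L be Hermitian d×d complex matrices, let Λ = max_j ‖H_j‖ (operator norm), let t ∈ ℝ and let r be a positive integer. Then ‖ exp(−it ∑_{j=1}^{L} H_j) − ( ∏_{j=1}^{L} exp(−i (t/r) H_j) )^r ‖ ≤ ((L Λ |t|)² / r) · exp(L Λ |t| / r), where ‖·‖ denotes the operator norm and exp the matrix exponential. -/
open Matrix
open scoped Matrix.Norms.L2Operator

noncomputable section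

section auxlemmas
open NormedSpace Nat



variable {𝔸 : Type*} [NormedRing 𝔸] [NormedAlgebra ℂ 𝔸] [CompleteSpace 𝔸]

lemma my_exp_tail (x : 𝔸) :
    NormedSpace.exp x = 1 + x + ∑' n : ℕ, (((n + 2)! : ℂ))⁻¹ • x ^ (n + 2) := by
  have hs : Summable fun n : ℕ => ((n ! : ℂ))⁻¹ • x ^ n := expSeries_summable' x
  rw [NormedSpace.exp_eq_tsum (𝕂 := ℂ)]
  show (∑' n : ℕ, ((n ! : ℂ))⁻¹ • x ^ n) = _
  rw [Summable.tsum_eq_zero_add hs, Summable.tsum_eq_zero_add ((summable_nat_add_iff 1).2 hs)]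
  simp [Nat.factorial]
  abel

lemma my_real_exp_tail (s : ℝ) :
    Real.exp s = 1 + s + ∑' n : ℕ, s ^ (n + 2) / (n + 2) ! := by
  have hs : Summable fun n : ℕ => s ^ n / n ! := Real.summable_pow_div_factorial s
  have h : Real.exp s = ∑' n : ℕ, s ^ n / n ! := by
    rw [Real.exp_eq_exp_ℝ, NormedSpace.exp_eq_tsum_div]
  rw [h, Summable.tsum_eq_zero_add hs, Summable.tsum_eq_zero_add ((summable_nat_add_iff 1).2 hs)]
  simp [Nat.factorial]
  abel

lemma my_term_summable (x : 𝔸) :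
    Summable fun n : ℕ => ‖(((n + 2)! : ℂ))⁻¹ • x ^ (n + 2)‖ := by
  have hg : Summable fun n : ℕ => ‖x‖ ^ (n + 2) / (n + 2)! :=
    (summable_nat_add_iff 2).2 (Real.summable_pow_div_factorial ‖x‖)
  refine Summable.of_nonneg_of_le (fun n => norm_nonneg _) (fun n => ?_) hg
  rw [norm_smul, norm_inv, Complex.norm_natCast, div_eq_inv_mul]
  exact mul_le_mul_of_nonneg_left (norm_pow_le' x (by omega)) (by positivity)

lemma my_norm_exp_sub_le (x : 𝔸) :
    ‖NormedSpace.exp x - 1 - x‖ ≤ Real.exp ‖x‖ - 1 - ‖x‖ := by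
  have h1 : NormedSpace.exp x - 1 - x = ∑' n : ℕ, (((n + 2)! : ℂ))⁻¹ • x ^ (n + 2) := by
    rw [my_exp_tail x]; abel
  have h2 : Real.exp ‖x‖ - 1 - ‖x‖ = ∑' n : ℕ, ‖x‖ ^ (n + 2) / (n + 2)! := by
    rw [my_real_exp_tail ‖x‖]; ring
  rw [h1, h2]
  refine (norm_tsum_le_tsum_norm (my_term_summable x)).trans ?_
  refine Summable.tsum_le_tsum (fun n => ?_) (my_term_summable x)
    ((summable_nat_add_iff 2).2 (Real.summable_pow_div_factorial ‖x‖))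
  rw [norm_smul, norm_inv, Complex.norm_natCast, div_eq_inv_mul]
  exact mul_le_mul_of_nonneg_left (norm_pow_le' x (by omega)) (by positivity)

lemma my_norm_exp_le [NormOneClass 𝔸] (x : 𝔸) : ‖NormedSpace.exp x‖ ≤ Real.exp ‖x‖ := by
  have h : NormedSpace.exp x = (NormedSpace.exp x - 1 - x) + 1 + x := by abel
  calc ‖NormedSpace.exp x‖ ≤ ‖NormedSpace.exp x - 1 - x‖ + ‖(1 : 𝔸)‖ + ‖x‖ := by
        nth_rewrite 1 [h]; exact (norm_add_le _ _).trans (add_le_add_left (norm_add_le _ _) _)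
    _ ≤ (Real.exp ‖x‖ - 1 - ‖x‖) + 1 + ‖x‖ := by
        rw [norm_one]; exact add_le_add_left (add_le_add_left (my_norm_exp_sub_le x) _) _
    _ = Real.exp ‖x‖ := by ring

lemma my_exp_sub_mono {u v : ℝ} (hu : 0 ≤ u) (huv : u ≤ v) :
    Real.exp u - 1 - u ≤ Real.exp v - 1 - v := by
  have h1 : Real.exp v = Real.exp u * Real.exp (v - u) := by
    rw [← Real.exp_add]; ring_nf
  nlinarith [Real.add_one_le_exp (v - u), Real.one_le_exp hu, Real.exp_pos u]

lemma my_exp_quad {s : ℝ} (hs : 0 ≤ s) :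
    Real.exp s - 1 - s ≤ s ^ 2 / 2 * Real.exp s := by
  have h2 : Real.exp s - 1 - s = ∑' n : ℕ, s ^ (n + 2) / (n + 2)! := by
    rw [my_real_exp_tail s]; ring
  have hexp : Real.exp s = ∑' n : ℕ, s ^ n / n ! := by
    rw [Real.exp_eq_exp_ℝ, NormedSpace.exp_eq_tsum_div]
  rw [h2, hexp, ← tsum_mul_left]
  refine Summable.tsum_le_tsum (fun n => ?_)
    ((summable_nat_add_iff 2).2 (Real.summable_pow_div_factorial s))
    ((Real.summable_pow_div_factorial s).mul_left _)
  have hfac : 2 * (n ! : ℝ) ≤ ((n + 2)! : ℝ) := by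
    have : 2 * n ! ≤ (n + 2)! := by
      rw [show n + 2 = (n + 1) + 1 from rfl, Nat.factorial_succ, Nat.factorial_succ]
      calc 2 * n ! = 2 * (1 * n !) := by ring
        _ ≤ (n + 1 + 1) * ((n + 1) * n !) :=
          Nat.mul_le_mul (by omega) (Nat.mul_le_mul_right _ (by omega))
    exact_mod_cast this
  have h0 : (0:ℝ) < 2 * n ! := by positivity
  calc s ^ (n + 2) / (n + 2)! ≤ s ^ (n + 2) / (2 * n !) :=
        div_le_div_of_nonneg_left (by positivity) h0 hfac
    _ = s ^ 2 / 2 * (s ^ n / n !) := by rw [pow_add]; ring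

lemma my_list_norm_sum_le (l : List 𝔸) : ‖l.sum‖ ≤ (l.map norm).sum := by
  induction l with
  | nil => simp
  | cons a l ih =>
    simp only [List.sum_cons, List.map_cons]
    exact (norm_add_le _ _).trans (add_le_add_right ih _)

lemma my_list_prod_le_one [NormOneClass 𝔸] (l : List 𝔸) (h : ∀ x ∈ l, ‖x‖ ≤ 1) :
    ‖l.prod‖ ≤ 1 := by
  induction l with
  | nil => simp
  | cons a l ih =>
    simp only [List.prod_cons]
    calc ‖a * l.prod‖ ≤ ‖a‖ * ‖l.prod‖ := norm_mul_le _ _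
      _ ≤ 1 * 1 := mul_le_mul (h a (by simp)) (ih fun x hx => h x (by simp [hx]))
          (norm_nonneg _) zero_le_one
      _ = 1 := by ring

lemma my_prod_exp_bound [NormOneClass 𝔸] (l : List 𝔸) :
    ‖(l.map (NormedSpace.exp)).prod - 1 - l.sum‖ ≤
      Real.exp ((l.map norm).sum) - 1 - (l.map norm).sum := by
  induction l with
  | nil => simp
  | cons a l ih =>
    simp only [List.map_cons, List.prod_cons, List.sum_cons]
    set Q := (l.map (NormedSpace.exp)).prod with hQ
    set S := l.sum with hS
    set s := (l.map norm).sum with hs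
    have hs0 : 0 ≤ s := by
      rw [hs]
      exact List.sum_nonneg fun x hx => by
        rcases List.mem_map.1 hx with ⟨y, -, rfl⟩; exact norm_nonneg _
    have key : NormedSpace.exp a * Q - 1 - (a + S) =
        NormedSpace.exp a * (Q - 1 - S) + (NormedSpace.exp a - 1 - a) * (1 + S) + a * S := by
      noncomm_ring
    have e1 : ‖NormedSpace.exp a * (Q - 1 - S)‖ ≤ Real.exp ‖a‖ * (Real.exp s - 1 - s) :=
      (norm_mul_le _ _).trans (mul_le_mul (my_norm_exp_le a) ih (norm_nonneg _)
        (Real.exp_pos _).le)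
    have e2 : ‖(NormedSpace.exp a - 1 - a) * (1 + S)‖ ≤ (Real.exp ‖a‖ - 1 - ‖a‖) * (1 + s) := by
      refine (norm_mul_le _ _).trans (mul_le_mul (my_norm_exp_sub_le a) ?_ (norm_nonneg _) ?_)
      · exact (norm_add_le _ _).trans (by rw [norm_one]; exact add_le_add_right (my_list_norm_sum_le l) 1)
      · nlinarith [Real.add_one_le_exp ‖a‖]
    have e3 : ‖a * S‖ ≤ ‖a‖ * s :=
      (norm_mul_le _ _).trans (mul_le_mul_of_nonneg_left (my_list_norm_sum_le l) (norm_nonneg _))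
    calc ‖NormedSpace.exp a * Q - 1 - (a + S)‖
        ≤ Real.exp ‖a‖ * (Real.exp s - 1 - s) + (Real.exp ‖a‖ - 1 - ‖a‖) * (1 + s) + ‖a‖ * s := by
          rw [key]
          exact ((norm_add_le _ _).trans (add_le_add_left (norm_add_le _ _) _)).trans
            (add_le_add (add_le_add e1 e2) e3)
      _ = Real.exp (‖a‖ + s) - 1 - (‖a‖ + s) := by rw [Real.exp_add]; ring

lemma my_pow_sub_pow [NormOneClass 𝔸] {X Y : 𝔸} (hX : ‖X‖ ≤ 1) (hY : ‖Y‖ ≤ 1) (n : ℕ) :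
    ‖X ^ n - Y ^ n‖ ≤ n * ‖X - Y‖ := by
  induction n with
  | zero => simp
  | succ n ih =>
    have key : X ^ (n + 1) - Y ^ (n + 1) = X * (X ^ n - Y ^ n) + (X - Y) * Y ^ n := by
      rw [pow_succ X, pow_succ Y, pow_mul_comm' X, pow_mul_comm' Y]; noncomm_ring
    have hYn : ‖Y ^ n‖ ≤ 1 := by
      calc ‖Y ^ n‖ ≤ ‖Y‖ ^ n := norm_pow_le _ n
        _ ≤ 1 := pow_le_one₀ (norm_nonneg _) hY
    calc ‖X ^ (n + 1) - Y ^ (n + 1)‖ ≤ ‖X * (X ^ n - Y ^ n)‖ + ‖(X - Y) * Y ^ n‖ := by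
          rw [key]; exact norm_add_le _ _
      _ ≤ 1 * (n * ‖X - Y‖) + ‖X - Y‖ * 1 := by
          refine add_le_add ((norm_mul_le _ _).trans ?_) ((norm_mul_le _ _).trans ?_)
          · exact mul_le_mul hX ih (norm_nonneg _) zero_le_one
          · exact mul_le_mul_of_nonneg_left hYn (norm_nonneg _)
      _ = (n + 1 : ℕ) * ‖X - Y‖ := by push_cast; ring

end auxlemmas

/-- First-order product (Lie–Trotter) formula error bound: for Hermitian `d × d` matrices
`H_1, …, H_L` with `Λ = max_j ‖H_j‖`, `t ∈ ℝ` and `r` a positive integer,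
`‖exp(-it ∑_j H_j) - (∏_j exp(-i(t/r) H_j))^r‖ ≤ ((LΛ|t|)²/r) exp(LΛ|t|/r)`,
the product being taken in increasing order of `j`. -/
theorem trotter_first_order_error_bound (d L : ℕ)
    (H : Fin L → Matrix (Fin d) (Fin d) ℂ) (hherm : ∀ j, (H j).IsHermitian)
    (Λ : ℝ) (hΛ : Λ = ⨆ j : Fin L, ‖H j‖) (t : ℝ) (r : ℕ) (hr : 0 < r) :
    ‖NormedSpace.exp ((-(Complex.I * (t : ℂ))) • ∑ j, H j) -
        (((List.finRange L).map
          (fun j => NormedSpace.exp ((-(Complex.I * ((t : ℂ) / (r : ℂ)))) • H j))).prod) ^ r‖ ≤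
      ((L * Λ * |t|) ^ 2 / r) * Real.exp (L * Λ * |t| / r) := by
  have hr0 : (r : ℝ) ≠ 0 := Nat.cast_ne_zero.2 hr.ne'
  rcases Nat.eq_zero_or_pos d with hd | hd
  · subst hd
    have h0 : (NormedSpace.exp ((-(Complex.I * (t : ℂ))) • ∑ j, H j) -
        (((List.finRange L).map
          (fun j => NormedSpace.exp ((-(Complex.I * ((t : ℂ) / (r : ℂ)))) • H j))).prod) ^ r)
        = 0 := by
      ext i j; exact i.elim0
    rw [h0, norm_zero]
    positivity
  -- main case
  haveI : Nonempty (Fin d) := ⟨⟨0, hd⟩⟩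
  haveI : Nontrivial (Matrix (Fin d) (Fin d) ℂ) := Matrix.nonempty
  have hΛ0 : 0 ≤ Λ := by
    rcases Nat.eq_zero_or_pos L with hL | hL
    · subst hL; rw [hΛ, Real.iSup_of_isEmpty]
    · have h := le_ciSup (Set.Finite.bddAbove (Set.finite_range fun j : Fin L => ‖H j‖)) ⟨0, hL⟩
      rw [← hΛ] at h
      exact (norm_nonneg _).trans h
  have hHle : ∀ j, ‖H j‖ ≤ Λ := fun j => by
    have h := le_ciSup (Set.Finite.bddAbove (Set.finite_range fun j : Fin L => ‖H j‖)) j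
    rwa [← hΛ] at h
  set c : ℂ := -(Complex.I * ((t : ℂ) / (r : ℂ))) with hc
  set S : Matrix (Fin d) (Fin d) ℂ := ∑ j, H j with hSdef
  set a : ℝ := (L : ℝ) * Λ * |t| / (r : ℝ) with hadef
  have ha0 : 0 ≤ a := div_nonneg
    (mul_nonneg (mul_nonneg (Nat.cast_nonneg L) hΛ0) (abs_nonneg t)) (Nat.cast_nonneg r)
  set l : List (Matrix (Fin d) (Fin d) ℂ) := (List.finRange L).map (fun j => c • H j) with hl
  set X : Matrix (Fin d) (Fin d) ℂ := NormedSpace.exp (c • S) with hXdef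
  set Y : Matrix (Fin d) (Fin d) ℂ := (l.map (NormedSpace.exp)).prod with hYdef
  set s : ℝ := (l.map norm).sum with hsdef
  -- rewrite goal as ‖X^r - Y^r‖
  have hrs : (-(Complex.I * (t : ℂ))) • S = r • (c • S) := by
    rw [← Nat.cast_smul_eq_nsmul ℂ r (c • S), smul_smul]
    congr 1
    have hrC : (r : ℂ) ≠ 0 := Nat.cast_ne_zero.2 hr.ne'
    rw [hc]
    field_simp
  have hY : ((List.finRange L).map
      (fun j => NormedSpace.exp (c • H j))).prod = Y := by
    rw [hYdef, hl, List.map_map]; rfl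
  let +nondep : NormedAlgebra ℚ (Matrix (Fin d) (Fin d) ℂ) := .restrictScalars ℚ ℂ _
  rw [hrs, NormedSpace.exp_nsmul, hY, ← hXdef]
  -- basic facts about l, s
  have hcnorm : ‖c‖ = |t| / r := by
    rw [hc, norm_neg, norm_mul, Complex.norm_I, one_mul, norm_div,
      Complex.norm_real, Complex.norm_natCast, Real.norm_eq_abs]
  have hlsum : l.sum = c • S := by
    rw [hl, ← Fin.sum_univ_def, hSdef, Finset.smul_sum]
  have hs_eq : s = ∑ j, ‖c • H j‖ := by
    rw [hsdef, hl, List.map_map, ← Fin.sum_univ_def]; rfl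
  have hs0 : 0 ≤ s := by
    rw [hs_eq]; exact Finset.sum_nonneg fun j _ => norm_nonneg _
  have hsa : s ≤ a := by
    rw [hs_eq]
    calc ∑ j, ‖c • H j‖ ≤ ∑ _j : Fin L, |t| / r * Λ := by
          refine Finset.sum_le_sum fun j _ => ?_
          rw [norm_smul, hcnorm]
          exact mul_le_mul_of_nonneg_left (hHle j) (by positivity)
      _ = (L : ℝ) * (|t| / r * Λ) := by
          rw [Finset.sum_const, Finset.card_univ, Fintype.card_fin, nsmul_eq_mul]
      _ = a := by rw [hadef]; ring
  -- unitarity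
  have hskew : ∀ (K : Matrix (Fin d) (Fin d) ℂ), K.IsHermitian →
      c • K ∈ skewAdjoint (Matrix (Fin d) (Fin d) ℂ) := by
    intro K hK
    rw [skewAdjoint.mem_iff, star_smul, ← neg_smul]
    have h1 : star K = K := hK
    have h2 : star c = -c := by
      rw [hc]
      simp [Complex.star_def, ← Complex.ofReal_natCast]
    rw [h1, h2]
  have hSh : S.IsHermitian := by
    rw [hSdef, Matrix.IsHermitian, Matrix.conjTranspose_sum]
    exact Finset.sum_congr rfl fun j _ => hherm j
  have hXnorm : ‖X‖ ≤ 1 := by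
    rw [hXdef]
    exact le_of_eq (CStarRing.norm_of_mem_unitary
      (NormedSpace.exp_mem_unitary_of_mem_skewAdjoint (hskew S hSh)))
  have hYnorm : ‖Y‖ ≤ 1 := by
    rw [hYdef]
    refine my_list_prod_le_one _ fun x hx => ?_
    rcases List.mem_map.1 hx with ⟨y, hy, rfl⟩
    rw [hl] at hy
    rcases List.mem_map.1 hy with ⟨j, -, rfl⟩
    exact le_of_eq (CStarRing.norm_of_mem_unitary
      (NormedSpace.exp_mem_unitary_of_mem_skewAdjoint (hskew (H j) (hherm j))))
  -- bound on ‖X - Y‖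
  have hXY : ‖X - Y‖ ≤ a ^ 2 * Real.exp a := by
    have hml : ‖l.sum‖ ≤ s := my_list_norm_sum_le l
    calc ‖X - Y‖ = ‖(X - 1 - l.sum) - (Y - 1 - l.sum)‖ := by congr 1; abel
      _ ≤ ‖X - 1 - l.sum‖ + ‖Y - 1 - l.sum‖ := norm_sub_le _ _
      _ ≤ (Real.exp s - 1 - s) + (Real.exp s - 1 - s) := by
          refine add_le_add ?_ ?_
          · have h1 : X = NormedSpace.exp l.sum := by rw [hlsum, hXdef]
            rw [h1]
            exact (my_norm_exp_sub_le l.sum).trans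
              (my_exp_sub_mono (norm_nonneg _) hml)
          · exact my_prod_exp_bound l
      _ ≤ 2 * (s ^ 2 / 2 * Real.exp s) := by
          have := my_exp_quad hs0; linarith
      _ = s ^ 2 * Real.exp s := by ring
      _ ≤ a ^ 2 * Real.exp a :=
          mul_le_mul (pow_le_pow_left₀ hs0 hsa 2) (Real.exp_le_exp.2 hsa)
            (Real.exp_pos s).le (by positivity)
  calc ‖X ^ r - Y ^ r‖ ≤ r * ‖X - Y‖ := my_pow_sub_pow hXnorm hYnorm r
    _ ≤ r * (a ^ 2 * Real.exp a) := mul_le_mul_of_nonneg_left hXY (Nat.cast_nonneg r)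
    _ = ((L : ℝ) * Λ * |t|) ^ 2 / r * Real.exp a := by
        rw [hadef]; field_simp
end
end

section
/- Let Γ_1, …, Γ_L be d×d complex matrices that are both Hermitian and unitary, let η_1, …, η_L be real numbers, let t ∈ ℝ and let r be a positive integer. Set U = exp(−it ∑_{j=1}^{L} η_j Γ_j) and V = ( ∏_{j=1}^{L} exp(−i (t/r) η_j Γ_j) )^r. Then for every unit vector ψ ∈ ℂ^d and every d×d matrix M with 0 ≤ M ≤ I, the probabilities P_U = ⟨Uψ, M (Uψ)⟩ and P_V = ⟨Vψ, M (Vψ)⟩ satisfy |P_U − P_V| ≤ 2 ((L |t| max_j|η_j|)² / r) · exp(L max_j|η_j| |t| / r). -/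
open Matrix
open scoped Matrix.Norms.L2Operator ComplexOrder

noncomputable section

section AuxTrotter
open scoped Nat

lemma aux_real_hasSum (a : ℝ) :
    HasSum (fun n : ℕ => a ^ (n+2) / ((n+2)! : ℝ)) (Real.exp a - 1 - a) := by
  have h := NormedSpace.expSeries_div_hasSum_exp a
  rw [Real.exp_eq_exp_ℝ]
  have := (hasSum_nat_add_iff' (f := fun n : ℕ => a ^ n / (n ! : ℝ)) 2).mpr h
  simpa [Finset.sum_range_succ, sub_sub] using this

lemma aux_g_nonneg {a : ℝ} (ha : 0 ≤ a) : 0 ≤ Real.exp a - 1 - a := by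
  nlinarith [Real.add_one_le_exp a]

lemma aux_g_mono {a b : ℝ} (hb : 0 ≤ b) (hab : b ≤ a) :
    Real.exp b - 1 - b ≤ Real.exp a - 1 - a := by
  have h1 : Real.exp a = Real.exp b * Real.exp (a - b) := by
    rw [← Real.exp_add]; ring_nf
  nlinarith [Real.add_one_le_exp (a - b), Real.one_le_exp hb]

lemma aux_g_le {a : ℝ} (ha : 0 ≤ a) :
    Real.exp a - 1 - a ≤ a ^ 2 / 2 * Real.exp a := by
  have h1 := aux_real_hasSum a
  have h2 : HasSum (fun n : ℕ => a ^ 2 / 2 * (a ^ n / (n ! : ℝ))) (a ^ 2 / 2 * Real.exp a) := by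
    rw [Real.exp_eq_exp_ℝ]
    exact (NormedSpace.expSeries_div_hasSum_exp a).mul_left _
  refine hasSum_le (fun n => ?_) h1 h2
  have hfac : (2 : ℝ) * (n ! : ℝ) ≤ ((n + 2)! : ℝ) := by
    have h2 : (n+2)! = (n+2) * ((n+1) * n !) := by
      simp [Nat.factorial_succ]
    rw [h2]
    push_cast
    have h3 : (1:ℝ) ≤ (n ! : ℝ) := by exact_mod_cast n.factorial_pos
    have h4 : (2:ℝ) ≤ ((n:ℝ)+2)*((n:ℝ)+1) := by nlinarith [n.cast_nonneg (α := ℝ)]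
    calc (2:ℝ) * (n ! : ℝ) ≤ (((n:ℝ)+2)*((n:ℝ)+1)) * (n ! : ℝ) :=
          mul_le_mul_of_nonneg_right h4 (by positivity)
      _ = ((n:ℝ)+2)*(((n:ℝ)+1)*(n ! : ℝ)) := by ring
  have h0 : (0:ℝ) < (n ! : ℝ) := by positivity
  have h0' : (0:ℝ) < ((n+2)! : ℝ) := by positivity
  rw [pow_add, div_le_iff₀ h0']
  have he : a ^ 2 / 2 * (a ^ n / (n ! : ℝ)) * ((n+2)! : ℝ) =
      a ^ n * a ^ 2 * (((n+2)! : ℝ) / (2 * (n ! : ℝ))) := by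
    field_simp
  rw [he]
  have hd : (1:ℝ) ≤ ((n+2)! : ℝ) / (2 * (n ! : ℝ)) :=
    (one_le_div (by positivity : (0:ℝ) < 2 * (n ! : ℝ))).mpr hfac
  exact le_mul_of_one_le_right (by positivity) hd

variable {d : ℕ}

lemma aux_norm_one_le : ‖(1 : Matrix (Fin d) (Fin d) ℂ)‖ ≤ 1 := by
  rw [Matrix.cstar_norm_def, _root_.map_one]
  exact ContinuousLinearMap.norm_id_le

lemma aux_norm_le_one_of_unitary {x : Matrix (Fin d) (Fin d) ℂ}
    (hx : x ∈ unitary (Matrix (Fin d) (Fin d) ℂ)) : ‖x‖ ≤ 1 := by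
  have h1 : xᴴ * x = 1 := (Unitary.mem_iff.mp hx).1
  have h2 := Matrix.l2_opNorm_conjTranspose_mul_self x
  rw [h1] at h2
  nlinarith [norm_nonneg x, aux_norm_one_le (d := d)]

lemma aux_exp_unitary (c : ℝ) (A : Matrix (Fin d) (Fin d) ℂ) (hA : A.IsHermitian) :
    NormedSpace.exp ((-(Complex.I * (c:ℂ))) • A) ∈ unitary (Matrix (Fin d) (Fin d) ℂ) := by
  let +nondep : NormedAlgebra ℚ (Matrix (Fin d) (Fin d) ℂ) := .restrictScalars ℚ ℂ _
  apply NormedSpace.exp_mem_unitary_of_mem_skewAdjoint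
  rw [skewAdjoint.mem_iff]
  rw [Matrix.star_eq_conjTranspose, Matrix.conjTranspose_smul, hA.eq]
  rw [← neg_smul]
  congr 1
  simp [Complex.ext_iff]

lemma aux_exp_remainder (x : Matrix (Fin d) (Fin d) ℂ) :
    ‖NormedSpace.exp x - 1 - x‖ ≤ Real.exp ‖x‖ - 1 - ‖x‖ := by
  have h := NormedSpace.exp_series_hasSum_exp' (𝕂 := ℂ) x
  have h2 := (hasSum_nat_add_iff' (f := fun n : ℕ => ((n ! : ℂ))⁻¹ • x ^ n) 2).mpr h
  have hsum : (∑ i ∈ Finset.range 2, ((i ! : ℂ))⁻¹ • x ^ i) = 1 + x := by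
    simp [Finset.sum_range_succ]
  rw [hsum] at h2
  have h3 : NormedSpace.exp x - 1 - x = ∑' n : ℕ, ((((n+2)! : ℂ))⁻¹ • x ^ (n+2)) := by
    rw [h2.tsum_eq, sub_sub]
  rw [h3]
  refine tsum_of_norm_bounded (aux_real_hasSum ‖x‖) (fun n => ?_)
  rw [norm_smul]
  have h4 : ‖(((n+2)! : ℂ))⁻¹‖ = (((n+2)! : ℝ))⁻¹ := by
    rw [norm_inv]
    norm_num
  rw [h4, div_eq_inv_mul]
  exact mul_le_mul_of_nonneg_left (norm_pow_le' x (Nat.succ_pos _)) (by positivity)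

lemma aux_norm_exp_le (x : Matrix (Fin d) (Fin d) ℂ) :
    ‖NormedSpace.exp x‖ ≤ Real.exp ‖x‖ := by
  have h1 := aux_exp_remainder x
  have h2 : ‖NormedSpace.exp x‖ ≤ ‖NormedSpace.exp x - 1 - x‖ + ‖(1 : Matrix (Fin d) (Fin d) ℂ)‖ + ‖x‖ := by
    have h := norm_add₃_le (a := NormedSpace.exp x - 1 - x) (b := (1 : Matrix (Fin d) (Fin d) ℂ)) (c := x)
    have he : NormedSpace.exp x - 1 - x + 1 + x = NormedSpace.exp x := by abel
    rwa [he] at h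
  have := aux_norm_one_le (d := d)
  linarith

lemma aux_norm_list_sum_le (l : List (Matrix (Fin d) (Fin d) ℂ)) :
    ‖l.sum‖ ≤ (l.map norm).sum := by
  induction l with
  | nil => simp
  | cons A l ih =>
    simp only [List.sum_cons, List.map_cons]
    exact (norm_add_le _ _).trans (by linarith)

lemma aux_prod_exp_remainder (l : List (Matrix (Fin d) (Fin d) ℂ)) :
    ‖(l.map (NormedSpace.exp)).prod - 1 - l.sum‖ ≤
      Real.exp (l.map norm).sum - 1 - (l.map norm).sum := by
  induction l with
  | nil => simp
  | cons A l ih =>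
    simp only [List.map_cons, List.prod_cons, List.sum_cons]
    set P := (l.map (NormedSpace.exp)).prod
    set S := l.sum
    set b := (l.map norm).sum with hb
    have hb0 : 0 ≤ b := by
      rw [hb]
      exact List.sum_nonneg (by simp +contextual [norm_nonneg])
    have hSb : ‖S‖ ≤ b := aux_norm_list_sum_le l
    have key : NormedSpace.exp A * P - 1 - (A + S)
        = NormedSpace.exp A * (P - 1 - S) + (NormedSpace.exp A - 1 - A)
          + (NormedSpace.exp A - 1) * S := by
      noncomm_ring
    rw [key]
    have hA := aux_exp_remainder A
    have hAexp := aux_norm_exp_le A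
    have hA1 : ‖NormedSpace.exp A - 1‖ ≤ Real.exp ‖A‖ - 1 := by
      have h := norm_sub_le (NormedSpace.exp A - 1 - A) (-A)
      simp only [sub_neg_eq_add, sub_add_cancel, norm_neg] at h
      linarith
    calc ‖NormedSpace.exp A * (P - 1 - S) + (NormedSpace.exp A - 1 - A)
          + (NormedSpace.exp A - 1) * S‖
        ≤ ‖NormedSpace.exp A‖ * ‖P - 1 - S‖ + ‖NormedSpace.exp A - 1 - A‖
          + ‖NormedSpace.exp A - 1‖ * ‖S‖ := by
          refine (norm_add₃_le).trans ?_
          gcongr <;> exact norm_mul_le _ _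
      _ ≤ Real.exp ‖A‖ * (Real.exp b - 1 - b) + (Real.exp ‖A‖ - 1 - ‖A‖)
          + (Real.exp ‖A‖ - 1) * b := by
          gcongr <;> first
            | exact aux_g_nonneg hb0
            | exact aux_g_nonneg (norm_nonneg A)
            | exact (Real.exp_pos _).le
            | exact hb0
            | exact ih
            | exact hAexp
            | exact hA1
            | exact hSb
            | linarith [aux_g_nonneg (norm_nonneg A), norm_nonneg A]
      _ = Real.exp (‖A‖ + b) - 1 - (‖A‖ + b) := by
          rw [Real.exp_add]; ring

variable {d : ℕ}

lemma aux_norm_one_le' : ‖(1 : Matrix (Fin d) (Fin d) ℂ)‖ ≤ 1 := by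
  rw [Matrix.cstar_norm_def, _root_.map_one]
  exact ContinuousLinearMap.norm_id_le

lemma aux_pow_sub_pow (a b : Matrix (Fin d) (Fin d) ℂ) (ha : ‖a‖ ≤ 1) (hb : ‖b‖ ≤ 1) (n : ℕ) :
    ‖a ^ n - b ^ n‖ ≤ n * ‖a - b‖ := by
  induction n with
  | zero => simp
  | succ n ih =>
    have han : ‖a ^ n‖ ≤ 1 := by
      cases n with
      | zero => simpa using aux_norm_one_le' (d := d)
      | succ m => exact (norm_pow_le' a (Nat.succ_pos m)).trans (pow_le_one₀ (norm_nonneg a) ha)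
    have key : a ^ (n+1) - b ^ (n+1) = a ^ n * (a - b) + (a ^ n - b ^ n) * b := by
      noncomm_ring
    rw [key]
    calc ‖a ^ n * (a - b) + (a ^ n - b ^ n) * b‖
        ≤ ‖a ^ n‖ * ‖a - b‖ + ‖a ^ n - b ^ n‖ * ‖b‖ :=
          (norm_add_le _ _).trans (by gcongr <;> exact norm_mul_le _ _)
      _ ≤ 1 * ‖a - b‖ + (n * ‖a - b‖) * 1 := by gcongr
      _ = ((n : ℝ) + 1) * ‖a - b‖ := by ring
      _ = ((n + 1 : ℕ) : ℝ) * ‖a - b‖ := by norm_cast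

-- Cauchy-Schwarz for dot products
lemma aux_cs (x y : Fin d → ℂ) :
    ‖star x ⬝ᵥ y‖ ≤ ‖(WithLp.equiv 2 (Fin d → ℂ)).symm x‖ *
      ‖(WithLp.equiv 2 (Fin d → ℂ)).symm y‖ := by
  have h : star x ⬝ᵥ y = inner ℂ ((WithLp.equiv 2 (Fin d → ℂ)).symm x)
      ((WithLp.equiv 2 (Fin d → ℂ)).symm y) := by rw [dotProduct_comm]; rfl
  rw [h]
  exact norm_inner_le_norm _ _

lemma aux_norm_sq (x : Fin d → ℂ) :
    ‖(WithLp.equiv 2 (Fin d → ℂ)).symm x‖ ^ 2 = Complex.re (star x ⬝ᵥ x) := by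
  have : inner ℂ ((WithLp.equiv 2 (Fin d → ℂ)).symm x) ((WithLp.equiv 2 (Fin d → ℂ)).symm x)
      = star x ⬝ᵥ x := by rw [dotProduct_comm]; rfl
  rw [← this, inner_self_eq_norm_sq_to_K]
  norm_cast

lemma aux_mulVec_norm (A : Matrix (Fin d) (Fin d) ℂ) (x : Fin d → ℂ) :
    ‖(WithLp.equiv 2 (Fin d → ℂ)).symm (A *ᵥ x)‖ ≤
      ‖A‖ * ‖(WithLp.equiv 2 (Fin d → ℂ)).symm x‖ :=
  Matrix.l2_opNorm_mulVec A ((WithLp.equiv 2 (Fin d → ℂ)).symm x)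

open scoped MatrixOrder in
lemma aux_prob_diff (Mm U V : Matrix (Fin d) (Fin d) ℂ)
    (hM₀ : Mm.PosSemidef) (hM₁ : (1 - Mm).PosSemidef)
    (hU : ‖U‖ ≤ 1) (hV : ‖V‖ ≤ 1)
    (ψ : Fin d → ℂ) (hψ : star ψ ⬝ᵥ ψ = 1) :
    ‖star (U *ᵥ ψ) ⬝ᵥ Mm *ᵥ (U *ᵥ ψ) - star (V *ᵥ ψ) ⬝ᵥ Mm *ᵥ (V *ᵥ ψ)‖ ≤
      2 * ‖U - V‖ := by
  set e := (WithLp.equiv 2 (Fin d → ℂ)).symm with he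
  set B := CFC.sqrt Mm with hBdef
  have hBB : B * B = Mm := CFC.sqrt_mul_sqrt_self Mm (nonneg_iff_posSemidef.mpr hM₀)
  have hBH : Bᴴ = B := (CFC.sqrt_nonneg Mm).posSemidef.1
  have hdot : ∀ x z : Fin d → ℂ, star x ⬝ᵥ Mm *ᵥ z = star (B *ᵥ x) ⬝ᵥ (B *ᵥ z) := by
    intro x z
    rw [Matrix.star_mulVec, hBH, Matrix.dotProduct_mulVec, Matrix.dotProduct_mulVec,
      Matrix.vecMul_vecMul, hBB]
  have hcontr : ∀ x : Fin d → ℂ, ‖e (B *ᵥ x)‖ ≤ ‖e x‖ := by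
    intro x
    have h1 : ‖e (B *ᵥ x)‖ ^ 2 ≤ ‖e x‖ ^ 2 := by
      rw [aux_norm_sq, aux_norm_sq, ← hdot]
      have h0 := hM₁.dotProduct_mulVec_nonneg x
      have h2 : star x ⬝ᵥ (1 - Mm) *ᵥ x = star x ⬝ᵥ x - star x ⬝ᵥ Mm *ᵥ x := by
        rw [Matrix.sub_mulVec, dotProduct_sub, Matrix.one_mulVec]
      rw [h2] at h0
      have h3 := (Complex.le_def.mp h0).1
      simpa using h3
    nlinarith [norm_nonneg (e (B *ᵥ x)), norm_nonneg (e x)]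
  have hψn : ‖e ψ‖ = 1 := by
    have h := aux_norm_sq ψ
    rw [hψ] at h
    simp only [Complex.one_re] at h
    rw [← Real.sqrt_sq (norm_nonneg (e ψ)), h, Real.sqrt_one]
  set u := U *ᵥ ψ
  set v := V *ᵥ ψ
  have hsplit : star u ⬝ᵥ Mm *ᵥ u - star v ⬝ᵥ Mm *ᵥ v =
      star u ⬝ᵥ Mm *ᵥ (u - v) + star (u - v) ⬝ᵥ Mm *ᵥ v := by
    rw [Matrix.mulVec_sub, dotProduct_sub, star_sub, sub_dotProduct]
    ring
  have huv : ‖e (u - v)‖ ≤ ‖U - V‖ := by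
    have : u - v = (U - V) *ᵥ ψ := by rw [Matrix.sub_mulVec]
    rw [this]
    have := aux_mulVec_norm (U - V) ψ
    rw [hψn] at this
    simpa [he] using this
  have hun : ‖e u‖ ≤ 1 := by
    have := aux_mulVec_norm U ψ
    rw [hψn] at this
    simpa [he] using this.trans (by linarith)
  have hvn : ‖e v‖ ≤ 1 := by
    have := aux_mulVec_norm V ψ
    rw [hψn] at this
    simpa [he] using this.trans (by linarith)
  rw [hsplit]
  calc ‖star u ⬝ᵥ Mm *ᵥ (u - v) + star (u - v) ⬝ᵥ Mm *ᵥ v‖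
      ≤ ‖star u ⬝ᵥ Mm *ᵥ (u - v)‖ + ‖star (u - v) ⬝ᵥ Mm *ᵥ v‖ :=
        norm_add_le _ _
    _ ≤ ‖e (B *ᵥ u)‖ * ‖e (B *ᵥ (u - v))‖ + ‖e (B *ᵥ (u - v))‖ * ‖e (B *ᵥ v)‖ := by
        rw [hdot u (u - v), hdot (u - v) v]
        exact add_le_add (aux_cs _ _) (aux_cs _ _)
    _ ≤ ‖e u‖ * ‖e (u - v)‖ + ‖e (u - v)‖ * ‖e v‖ := by
        gcongr <;> first | exact hcontr _ | exact norm_nonneg _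
    _ ≤ 1 * ‖U - V‖ + ‖U - V‖ * 1 := by
        gcongr <;> first | exact hun | exact hvn | exact huv | exact norm_nonneg _
    _ = 2 * ‖U - V‖ := by ring


end AuxTrotter

/-- Let `Γ_1, …, Γ_L` be `d × d` complex matrices that are Hermitian and unitary, let
`η_1, …, η_L` be real, `t ∈ ℝ`, `r` a positive integer, and set
`U = exp(-it ∑_j η_j Γ_j)` and `V = (∏_j exp(-i(t/r) η_j Γ_j))^r`.  Then for every unit
vector `ψ ∈ ℂ^d` and every matrix `M` with `0 ≤ M ≤ I`, the probabilities
`P_U = ⟨Uψ, M(Uψ)⟩` and `P_V = ⟨Vψ, M(Vψ)⟩` satisfy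
`|P_U - P_V| ≤ 2 ((L|t| max_j |η_j|)²/r) exp(L max_j |η_j| |t| / r)`. -/
theorem trotter_measurement_probability_error_bound (d L : ℕ)
    (Γ : Fin L → Matrix (Fin d) (Fin d) ℂ)
    (hherm : ∀ j, (Γ j).IsHermitian) (hunit : ∀ j, Γ j * (Γ j)ᴴ = 1 ∧ (Γ j)ᴴ * Γ j = 1)
    (η : Fin L → ℝ) (t : ℝ) (r : ℕ) (hr : 0 < r)
    (U V : Matrix (Fin d) (Fin d) ℂ)
    (hUdef : U = NormedSpace.exp ((-(Complex.I * (t : ℂ))) • ∑ j, (η j : ℂ) • Γ j))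
    (hVdef : V = (((List.finRange L).map (fun j =>
        NormedSpace.exp ((-(Complex.I * ((t : ℂ) / (r : ℂ)))) • ((η j : ℂ) • Γ j)))).prod) ^ r)
    (ψ : Fin d → ℂ) (hψ : star ψ ⬝ᵥ ψ = 1)
    (M : Matrix (Fin d) (Fin d) ℂ) (hM₀ : M.PosSemidef) (hM₁ : (1 - M).PosSemidef) :
    ‖star (U.mulVec ψ) ⬝ᵥ M.mulVec (U.mulVec ψ) -
        star (V.mulVec ψ) ⬝ᵥ M.mulVec (V.mulVec ψ)‖ ≤
      2 * (((L * |t| * ⨆ j : Fin L, |η j|) ^ 2) / r) *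
        Real.exp (L * (⨆ j : Fin L, |η j|) * |t| / r) := by
  have hr0 : (0:ℝ) < (r:ℝ) := by exact_mod_cast hr
  have hrC : ((r:ℕ):ℂ) ≠ 0 := by exact_mod_cast hr.ne'
  set c : ℝ := ⨆ j : Fin L, |η j| with hc
  have hcj : ∀ j : Fin L, |η j| ≤ c := by
    intro j
    rw [hc]
    exact le_ciSup (f := fun j : Fin L => |η j|) (Set.Finite.bddAbove (Set.finite_range _)) j
  have hc0 : 0 ≤ c := by
    rcases isEmpty_or_nonempty (Fin L) with h | h
    · rw [hc, Real.iSup_of_isEmpty]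
    · exact (abs_nonneg _).trans (hcj (Classical.arbitrary _))
  -- the Hamiltonian
  set H : Matrix (Fin d) (Fin d) ℂ := ∑ j, (η j : ℂ) • Γ j with hH
  have hHherm : H.IsHermitian := by
    rw [hH, Matrix.IsHermitian, Matrix.conjTranspose_sum]
    refine Finset.sum_congr rfl fun j _ => ?_
    rw [Matrix.conjTranspose_smul, (hherm j).eq, Complex.star_def, Complex.conj_ofReal]
  -- single Trotter step quantities
  set x₁ : Matrix (Fin d) (Fin d) ℂ := (-(Complex.I * ((t : ℂ) / (r : ℂ)))) • H with hx₁
  set U₁ : Matrix (Fin d) (Fin d) ℂ := NormedSpace.exp x₁ with hU₁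
  set lA : List (Matrix (Fin d) (Fin d) ℂ) := (List.finRange L).map
    (fun j => (-(Complex.I * ((t : ℂ) / (r : ℂ)))) • ((η j : ℂ) • Γ j)) with hlA
  set V₁ : Matrix (Fin d) (Fin d) ℂ := (lA.map (NormedSpace.exp)).prod with hV₁
  -- unitarity facts
  have hΓu : ∀ j, ‖Γ j‖ ≤ 1 := by
    intro j
    refine aux_norm_le_one_of_unitary (Unitary.mem_iff.mpr ?_)
    exact ⟨(hunit j).2, (hunit j).1⟩
  have hsmulherm : ∀ j : Fin L, ((η j : ℂ) • Γ j).IsHermitian := by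
    intro j
    rw [Matrix.IsHermitian, Matrix.conjTranspose_smul, (hherm j).eq, Complex.star_def,
      Complex.conj_ofReal]
  have hcast : ((t / r : ℝ) : ℂ) = (t : ℂ) / (r : ℂ) := by push_cast; ring
  have hU₁u : U₁ ∈ unitary (Matrix (Fin d) (Fin d) ℂ) := by
    rw [hU₁, hx₁, ← hcast]
    exact aux_exp_unitary _ _ hHherm
  have hV₁u : V₁ ∈ unitary (Matrix (Fin d) (Fin d) ℂ) := by
    rw [hV₁]
    refine Submonoid.list_prod_mem _ ?_
    intro x hx
    simp only [hlA, List.map_map, List.mem_map, Function.comp] at hx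
    obtain ⟨j, -, rfl⟩ := hx
    rw [← hcast]
    exact aux_exp_unitary _ _ (hsmulherm j)
  have hUu : U ∈ unitary (Matrix (Fin d) (Fin d) ℂ) := by
    rw [hUdef]
    have : (-(Complex.I * (t : ℂ))) = (-(Complex.I * ((t : ℝ) : ℂ))) := by norm_cast
    rw [this]
    exact aux_exp_unitary t _ hHherm
  have hVu : V ∈ unitary (Matrix (Fin d) (Fin d) ℂ) := by
    rw [hVdef]
    refine pow_mem ?_ r
    refine Submonoid.list_prod_mem _ ?_
    intro x hx
    simp only [List.mem_map] at hx
    obtain ⟨j, -, rfl⟩ := hx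
    rw [← hcast]
    exact aux_exp_unitary _ _ (hsmulherm j)
  -- U = U₁ ^ r, V = V₁ ^ r
  have hUpow : U = U₁ ^ r := by
    let +nondep : NormedAlgebra ℚ (Matrix (Fin d) (Fin d) ℂ) := .restrictScalars ℚ ℂ _
    rw [hUdef, hU₁, hx₁, ← NormedSpace.exp_nsmul, ← Nat.cast_smul_eq_nsmul ℂ, smul_smul]
    have hsc : ((r:ℕ):ℂ) * (-(Complex.I * ((t : ℂ) / (r : ℂ)))) = -(Complex.I * (t:ℂ)) := by
      field_simp
    rw [hsc]
  have hVpow : V = V₁ ^ r := by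
    rw [hVdef, hV₁, hlA, List.map_map]
    rfl
  -- norm bounds on list elements
  set α : ℝ := L * |t| * c / r with hα
  have hα0 : 0 ≤ α := by positivity
  have helt : ∀ x ∈ lA, ‖x‖ ≤ |t| / r * c := by
    intro x hx
    simp only [hlA, List.mem_map] at hx
    obtain ⟨j, -, rfl⟩ := hx
    rw [norm_smul, norm_smul]
    have h1 : ‖(-(Complex.I * ((t : ℂ) / (r : ℂ))))‖ = |t| / r := by
      rw [norm_neg, norm_mul, Complex.norm_I, one_mul, norm_div]
      simp [Complex.norm_real, Real.norm_eq_abs]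
    have h2 : ‖((η j : ℝ) : ℂ)‖ = |η j| := by
      simp [Complex.norm_real, Real.norm_eq_abs]
    rw [h1, h2]
    calc |t| / r * (|η j| * ‖Γ j‖) ≤ |t| / r * (c * 1) := by
          gcongr
          · exact hcj j
          · exact hΓu j
      _ = |t| / r * c := by ring
  have hlen : lA.length = L := by simp [hlA]
  have hsumnorm : (lA.map norm).sum ≤ α := by
    have h := List.sum_le_card_nsmul (lA.map norm) (|t| / r * c) (by
      intro x hx
      simp only [List.mem_map] at hx
      obtain ⟨y, hy, rfl⟩ := hx
      exact helt y hy)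
    simp only [List.length_map, hlen, nsmul_eq_mul] at h
    calc (lA.map norm).sum ≤ (L : ℝ) * (|t| / r * c) := h
      _ = α := by rw [hα]; ring
  have hsumnorm0 : 0 ≤ (lA.map norm).sum := by
    refine List.sum_nonneg fun x hx => ?_
    simp only [List.mem_map] at hx
    obtain ⟨y, -, rfl⟩ := hx
    exact norm_nonneg y
  -- sum of the list is x₁
  have hSsum : lA.sum = x₁ := by
    rw [hlA, hx₁, hH, Finset.smul_sum, ← Fin.sum_univ_def]
  have hx₁norm : ‖x₁‖ ≤ α := by
    rw [← hSsum]
    exact (aux_norm_list_sum_le lA).trans hsumnorm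
  -- single-step error
  have hstep : ‖U₁ - V₁‖ ≤ 2 * (Real.exp α - 1 - α) := by
    have h1 : ‖U₁ - 1 - x₁‖ ≤ Real.exp α - 1 - α := by
      refine (aux_exp_remainder x₁).trans ?_
      exact aux_g_mono (norm_nonneg _) hx₁norm
    have h2 : ‖V₁ - 1 - x₁‖ ≤ Real.exp α - 1 - α := by
      rw [hV₁, ← hSsum]
      refine (aux_prod_exp_remainder lA).trans ?_
      exact aux_g_mono hsumnorm0 hsumnorm
    have h3 : U₁ - V₁ = (U₁ - 1 - x₁) - (V₁ - 1 - x₁) := by abel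
    rw [h3]
    have := norm_sub_le (U₁ - 1 - x₁) (V₁ - 1 - x₁)
    linarith
  -- full error
  have hUV : ‖U - V‖ ≤ r * (2 * (Real.exp α - 1 - α)) := by
    rw [hUpow, hVpow]
    refine (aux_pow_sub_pow U₁ V₁ (aux_norm_le_one_of_unitary hU₁u)
      (aux_norm_le_one_of_unitary hV₁u) r).trans ?_
    have := mul_le_mul_of_nonneg_left hstep (le_of_lt hr0)
    linarith
  -- probability difference
  have hprob := aux_prob_diff M U V hM₀ hM₁ (aux_norm_le_one_of_unitary hUu)
    (aux_norm_le_one_of_unitary hVu) ψ hψ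
  have hg := aux_g_le hα0
  have hαr : L * |t| * c = α * r := by rw [hα]; field_simp
  have hexp : L * c * |t| / r = α := by rw [hα]; ring
  calc ‖star (U.mulVec ψ) ⬝ᵥ M.mulVec (U.mulVec ψ) -
        star (V.mulVec ψ) ⬝ᵥ M.mulVec (V.mulVec ψ)‖ ≤ 2 * ‖U - V‖ := hprob
    _ ≤ 2 * (r * (2 * (Real.exp α - 1 - α))) := by linarith
    _ ≤ 2 * (r * (2 * (α ^ 2 / 2 * Real.exp α))) := by
        have : (0:ℝ) ≤ r := hr0.le
        nlinarith
    _ = 2 * ((α * r) ^ 2 / r) * Real.exp α := by field_simp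
    _ = 2 * ((L * |t| * c) ^ 2 / r) * Real.exp (L * c * |t| / r) := by rw [hαr, hexp]
end
end
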